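/- (Persistence of excitation is robust to vanishing perturbations, Lemma A(e)) Let X be a finite-dimensional real inner product space, g : [0,∞) → X a bounded continuous signal that is PE with respect to the identity operator Id_X, and δ : [0,∞) → X a continuous signal with ‖δ(t)‖ → 0 as t → ∞. Then the signal g + δ is also PE with respect to Id_X. -/

import Mathlib

open Set Filter

/-- `g` (restricted to `[0,∞)`) is persistently exciting with respect to the identity
operator on `X`. -/
def IsPEId {X : Type*} [NormedAddCommGroup X] [InnerProductSpace ℝ X] (g : ℝ → X) : Prop :=
  ∃ T κ : ℝ, 0 < T ∧ 0 < κ ∧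
    ∀ x : X, ∀ t : ℝ, 0 ≤ t →
      κ * ‖x‖ ^ 2 ≤ ∫ τ in t..(t + T), (inner ℝ (g τ) x : ℝ) ^ 2

/-- **Persistence of excitation is robust to vanishing perturbations** (Lemma A(e)).
Let `X` be a finite-dimensional real inner product space, `g : [0,∞) → X` a bounded
continuous signal that is PE with respect to `Id_X`, and `δ : [0,∞) → X` a continuous
signal with `‖δ(t)‖ → 0` as `t → ∞`. Then `g + δ` is also PE with respect to `Id_X`. -/
theorem pe_robust_to_vanishing_perturbation
    {X : Type*} [NormedAddCommGroup X] [InnerProductSpace ℝ X] [FiniteDimensional ℝ X]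
    (g δ : ℝ → X) (hg : ContinuousOn g (Ici 0)) (hδ : ContinuousOn δ (Ici 0))
    (hgb : ∃ M : ℝ, ∀ t : ℝ, 0 ≤ t → ‖g t‖ ≤ M)
    (hδ0 : Tendsto (fun t => ‖δ t‖) atTop (nhds 0))
    (hPE : IsPEId g) :
    IsPEId (fun t => g t + δ t) := by
  obtain ⟨T, κ, hT, hκ, hPE⟩ := hPE
  have hεpos : (0:ℝ) < Real.sqrt (κ / (4 * T)) := Real.sqrt_pos.mpr (by positivity)
  set ε := Real.sqrt (κ / (4 * T)) with hεdef
  have hε2 : ε ^ 2 = κ / (4 * T) := Real.sq_sqrt (by positivity)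
  obtain ⟨t₀', ht₀'⟩ := eventually_atTop.mp (hδ0.eventually (gt_mem_nhds hεpos))
  set t₁ := max t₀' 0 with ht₁def
  have ht₁0 : (0:ℝ) ≤ t₁ := le_max_right _ _
  have hδsmall : ∀ τ : ℝ, t₁ ≤ τ → ‖δ τ‖ ≤ ε := fun τ hτ =>
    le_of_lt (ht₀' τ (le_trans (le_max_left _ _) hτ))
  have hsub : ∀ a b : ℝ, 0 ≤ a → 0 ≤ b → uIcc a b ⊆ Ici 0 := by
    intro a b ha hb y hy
    exact le_trans (le_min ha hb) hy.1
  refine ⟨t₁ + T, κ / 4, by positivity, by positivity, ?_⟩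
  intro x t ht
  set s := max t t₁ with hsdef
  have hs0 : (0:ℝ) ≤ s := le_trans ht (le_max_left _ _)
  have hst : t ≤ s := le_max_left _ _
  have hs1 : t₁ ≤ s := le_max_right _ _
  have hsT : s + T ≤ t + (t₁ + T) := by
    have : s ≤ t + t₁ := max_le (le_add_of_nonneg_right ht₁0) (le_add_of_nonneg_left ht)
    linarith
  -- continuity of the needed integrands on [0,∞)
  have hcg : ContinuousOn (fun τ => (inner ℝ (g τ) x : ℝ) ^ 2) (Ici 0) :=
    (hg.inner continuousOn_const).pow 2
  have hcδ : ContinuousOn (fun τ => (inner ℝ (δ τ) x : ℝ) ^ 2) (Ici 0) :=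
    (hδ.inner continuousOn_const).pow 2
  have hcgδ : ContinuousOn (fun τ => (inner ℝ (g τ + δ τ) x : ℝ) ^ 2) (Ici 0) :=
    (((hg.add hδ).inner continuousOn_const).pow 2)
  have hiδ : IntervalIntegrable (fun τ => (inner ℝ (δ τ) x : ℝ) ^ 2) MeasureTheory.volume s (s + T) :=
    (hcδ.mono (hsub _ _ hs0 (by linarith))).intervalIntegrable
  have higδ : IntervalIntegrable (fun τ => (inner ℝ (g τ + δ τ) x : ℝ) ^ 2)
      MeasureTheory.volume s (s + T) :=
    (hcgδ.mono (hsub _ _ hs0 (by linarith))).intervalIntegrable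
  have higδ' : IntervalIntegrable (fun τ => (inner ℝ (g τ + δ τ) x : ℝ) ^ 2)
      MeasureTheory.volume t (t + (t₁ + T)) :=
    (hcgδ.mono (hsub _ _ ht (by linarith))).intervalIntegrable
  -- bound on the perturbation integral
  have hδint : (∫ τ in s..(s + T), (inner ℝ (δ τ) x : ℝ) ^ 2) ≤ κ / 4 * ‖x‖ ^ 2 := by
    have hle : ∀ τ ∈ Icc s (s + T), (inner ℝ (δ τ) x : ℝ) ^ 2 ≤ ε ^ 2 * ‖x‖ ^ 2 := by
      intro τ hτ
      have h1 : |(inner ℝ (δ τ) x : ℝ)| ≤ ‖δ τ‖ * ‖x‖ := abs_real_inner_le_norm _ _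
      have h2 : ‖δ τ‖ ≤ ε := hδsmall τ (le_trans hs1 hτ.1)
      have h3 : (inner ℝ (δ τ) x : ℝ) ^ 2 ≤ (‖δ τ‖ * ‖x‖) ^ 2 := by
        rw [← sq_abs]
        exact pow_le_pow_left₀ (abs_nonneg _) h1 2
      have h4 : (‖δ τ‖ * ‖x‖) ^ 2 ≤ (ε * ‖x‖) ^ 2 :=
        pow_le_pow_left₀ (by positivity) (mul_le_mul_of_nonneg_right h2 (norm_nonneg _)) 2
      calc (inner ℝ (δ τ) x : ℝ) ^ 2 ≤ (ε * ‖x‖) ^ 2 := le_trans h3 h4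
        _ = ε ^ 2 * ‖x‖ ^ 2 := by ring
    have hmono := intervalIntegral.integral_mono_on (by linarith : s ≤ s + T) hiδ
      (intervalIntegrable_const) hle
    have hconst : (∫ _ in s..(s + T), ε ^ 2 * ‖x‖ ^ 2) = T * (ε ^ 2 * ‖x‖ ^ 2) := by
      rw [intervalIntegral.integral_const, smul_eq_mul]
      ring_nf
    rw [hconst] at hmono
    calc (∫ τ in s..(s + T), (inner ℝ (δ τ) x : ℝ) ^ 2) ≤ T * (ε ^ 2 * ‖x‖ ^ 2) := hmono
      _ = T * (κ / (4 * T) * ‖x‖ ^ 2) := by rw [hε2]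
      _ = κ / 4 * ‖x‖ ^ 2 := by field_simp
  -- pointwise inequality and integral comparison
  have hig : IntervalIntegrable (fun τ => (inner ℝ (g τ) x : ℝ) ^ 2)
      MeasureTheory.volume s (s + T) :=
    (hcg.mono (hsub _ _ hs0 (by linarith))).intervalIntegrable
  have hpt : ∀ τ ∈ Icc s (s + T), (inner ℝ (g τ) x : ℝ) ^ 2 ≤
      2 * (inner ℝ (g τ + δ τ) x : ℝ) ^ 2 + 2 * (inner ℝ (δ τ) x : ℝ) ^ 2 := by
    intro τ _
    have heq : (inner ℝ (g τ) x : ℝ) = (inner ℝ (g τ + δ τ) x : ℝ) - (inner ℝ (δ τ) x : ℝ) := by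
      rw [inner_add_left]; ring
    rw [heq]
    nlinarith [sq_nonneg ((inner ℝ (g τ + δ τ) x : ℝ) + (inner ℝ (δ τ) x : ℝ))]
  have hmono2 : (∫ τ in s..(s + T), (inner ℝ (g τ) x : ℝ) ^ 2) ≤
      ∫ τ in s..(s + T), (2 * (inner ℝ (g τ + δ τ) x : ℝ) ^ 2 + 2 * (inner ℝ (δ τ) x : ℝ) ^ 2) :=
    intervalIntegral.integral_mono_on (by linarith : s ≤ s + T) hig
      (((higδ.const_mul 2).add (hiδ.const_mul 2))) hpt
  have hsplit : (∫ τ in s..(s + T),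
      (2 * (inner ℝ (g τ + δ τ) x : ℝ) ^ 2 + 2 * (inner ℝ (δ τ) x : ℝ) ^ 2)) =
      2 * (∫ τ in s..(s + T), (inner ℝ (g τ + δ τ) x : ℝ) ^ 2) +
      2 * (∫ τ in s..(s + T), (inner ℝ (δ τ) x : ℝ) ^ 2) := by
    rw [intervalIntegral.integral_add (higδ.const_mul 2) (hiδ.const_mul 2),
      intervalIntegral.integral_const_mul, intervalIntegral.integral_const_mul]
  have hPEs := hPE x s hs0
  have hkey : κ / 4 * ‖x‖ ^ 2 ≤ ∫ τ in s..(s + T), (inner ℝ (g τ + δ τ) x : ℝ) ^ 2 := by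
    rw [hsplit] at hmono2
    linarith
  -- enlarge the interval
  have hfinal : (∫ τ in s..(s + T), (inner ℝ (g τ + δ τ) x : ℝ) ^ 2) ≤
      ∫ τ in t..(t + (t₁ + T)), (inner ℝ (g τ + δ τ) x : ℝ) ^ 2 :=
    intervalIntegral.integral_mono_interval hst (by linarith) hsT
      (Filter.Eventually.of_forall fun τ => sq_nonneg _) higδ'
  exact le_trans hkey hfinal
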